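/- If [x,y] is a MUPS of S with [x,y] contained in [s,t], and S[i..j] is any unique palindromic substring of S containing [s,t], then S[i..j] has the same center as [x,y], i.e., i+j = x+y. -/
import Mathlib

/-- `sub S i j` is the substring `S[i..j]`, 1-indexed and inclusive. -/
def sub (S : List Char) (i j : ℕ) : List Char := (S.drop (i-1)).take (j+1-i)

/-- A string is a palindrome if it equals its reversal. -/
def isPal (w : List Char) : Prop := w.reverse = w

/-- The set of (1-indexed) occurrence positions of `w` in `S`. -/
def occs (S w : List Char) : Finset ℕ :=
  (Finset.Icc 1 S.length).filter (fun p => sub S p (p + w.length - 1) = w)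

/-- `w` occurs exactly once in `S`. -/
def uniqueIn (S w : List Char) : Prop := (occs S w).card = 1

/-- `[i,j]` is (the interval of) a unique palindromic substring of `S`. -/
def UPS (S : List Char) (i j : ℕ) : Prop :=
  1 ≤ i ∧ i ≤ j ∧ j ≤ S.length ∧ isPal (sub S i j) ∧ uniqueIn S (sub S i j)

/-- `[i,j]` is a minimal unique palindromic substring of `S`. -/
def MUPS (S : List Char) (i j : ℕ) : Prop :=
  UPS S i j ∧ (j + 1 - i ≤ 2 ∨ 2 ≤ (occs S (sub S (i+1) (j-1))).card)

/-- `[i,j]` is a shortest unique palindromic substring of `S` for the query `[s,t]`. -/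
def SUPS (S : List Char) (s t i j : ℕ) : Prop :=
  UPS S i j ∧ i ≤ s ∧ s ≤ t ∧ t ≤ j ∧
    ∀ i' j', UPS S i' j' → i' ≤ s → t ≤ j' → j - i ≤ j' - i'

lemma rev_drop_take (l : List Char) (a k : ℕ) (h : a + k ≤ l.length) :
    (l.reverse.drop a).take k = ((l.drop (l.length - a - k)).take k).reverse := by
  rw [List.drop_reverse, List.take_reverse, List.length_take,
    Nat.min_eq_left (Nat.sub_le _ _), List.drop_take]
  have e : l.length - a - (l.length - a - k) = k := by omega
  rw [e]

lemma sub_as_sub (S : List Char) (i j x y : ℕ) (hix : i ≤ x) (hxy : x ≤ y) (hyj : y ≤ j)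
    (h1 : 1 ≤ i) :
    sub S x y = ((sub S i j).drop (x - i)).take (y + 1 - x) := by
  unfold sub
  rw [List.drop_take, List.drop_drop, List.take_take]
  have e1 : i - 1 + (x - i) = x - 1 := by omega
  have e2 : min (y + 1 - x) (j + 1 - i - (x - i)) = y + 1 - x := by omega
  rw [e1, e2]

lemma sub_length (S : List Char) (x y : ℕ) (h1 : 1 ≤ x) (hxy : x ≤ y) (hy : y ≤ S.length) :
    (sub S x y).length = y + 1 - x := by
  unfold sub
  rw [List.length_take, List.length_drop]
  omega

lemma mirror (S : List Char) (i j x y : ℕ) (h1 : 1 ≤ i) (hix : i ≤ x) (hxy : x ≤ y)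
    (hyj : y ≤ j) (hj : j ≤ S.length) (hP : isPal (sub S i j)) (hw : isPal (sub S x y)) :
    sub S (i + j - y) (i + j - x) = sub S x y := by
  have hPlen : (sub S i j).length = j + 1 - i := sub_length S i j h1 (hix.trans (hxy.trans hyj)) hj
  rw [sub_as_sub S i j (i+j-y) (i+j-x) (by omega) (by omega) (by omega) h1]
  have e1 : i + j - y - i = j - y := by omega
  have e2 : i + j - x + 1 - (i + j - y) = y + 1 - x := by omega
  rw [e1, e2, ← hP, rev_drop_take _ _ _ (by rw [hPlen]; omega), hPlen]
  have e3 : j + 1 - i - (j - y) - (y + 1 - x) = x - i := by omega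
  rw [e3, ← sub_as_sub S i j x y hix hxy hyj h1, hw]

theorem stmt10 (S : List Char) (s t x y i j : ℕ)
    (hm : MUPS S x y) (hc : s ≤ x ∧ y ≤ t)
    (h : UPS S i j) (hcont : i ≤ s ∧ t ≤ j) :
    i + j = x + y := by
  obtain ⟨⟨hx1, hxy, hyS, hwpal, hwuniq⟩, -⟩ := hm
  obtain ⟨hi1, hij, hjS, hPpal, -⟩ := h
  have hix : i ≤ x := le_trans hcont.1 hc.1
  have hyj : y ≤ j := le_trans hc.2 hcont.2
  set w := sub S x y with hw
  have hwlen : w.length = y + 1 - x := sub_length S x y hx1 hxy hyS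
  have hx_mem : x ∈ occs S w := by
    simp only [occs, Finset.mem_filter, Finset.mem_Icc]
    refine ⟨⟨hx1, hxy.trans hyS⟩, ?_⟩
    rw [hwlen]
    congr 1
    omega
  have hp_mem : i + j - y ∈ occs S w := by
    simp only [occs, Finset.mem_filter, Finset.mem_Icc]
    refine ⟨⟨by omega, by omega⟩, ?_⟩
    rw [hwlen]
    have e : i + j - y + (y + 1 - x) - 1 = i + j - x := by omega
    rw [e]
    exact mirror S i j x y hi1 hix hxy hyj hjS hPpal hwpal
  have hcard := hwuniq
  rw [uniqueIn, Finset.card_eq_one] at hcard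
  obtain ⟨a, ha⟩ := hcard
  rw [ha, Finset.mem_singleton] at hx_mem hp_mem
  omega
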